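/- Let n ∈ ℕ and let p, q ∈ ℂ[u, u⁻¹] be Laurent polynomials that are symmetric under the involution u ↦ u⁻¹ (equivalently, the coefficient of u^j in each equals the coefficient of u^{−j} for every j ∈ ℤ). If p(u)·(u + u⁻¹) + q(u)·(u − u⁻¹) = u^{−(2n+1)}, then p(u) = (1/2)·Σ_{j=0}^{2n} (−1)^j u^{2n−2j} and q(u) = −(1/2)·Σ_{j=0}^{2n} u^{2n−2j}. -/

import Mathlib

open LaurentPolynomial Finset

lemma aux_Tadd_ne : (T 1 + T (-1) : LaurentPolynomial ℂ) ≠ 0 := by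
  have h2 : (T 1 + T (-1) : LaurentPolynomial ℂ)
      = T (-1) * Polynomial.toLaurent (Polynomial.X ^ 2 + 1) := by
    rw [map_add, Polynomial.toLaurent_X_pow, map_one, mul_add, mul_one, ← T_add]
    norm_num [add_comm]
  rw [h2]
  refine mul_ne_zero (isUnit_T (-1)).ne_zero (Polynomial.toLaurent_ne_zero.mpr ?_)
  intro hx
  have := congrArg (Polynomial.eval 0) hx
  simp at this

lemma aux_Tsub_ne : (T 1 - T (-1) : LaurentPolynomial ℂ) ≠ 0 := by
  have h2 : (T 1 - T (-1) : LaurentPolynomial ℂ)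
      = T (-1) * Polynomial.toLaurent (Polynomial.X ^ 2 - 1) := by
    rw [map_sub, Polynomial.toLaurent_X_pow, map_one, mul_sub, mul_one, ← T_add]
    norm_num [add_comm]
  rw [h2]
  refine mul_ne_zero (isUnit_T (-1)).ne_zero (Polynomial.toLaurent_ne_zero.mpr ?_)
  intro hx
  have := congrArg (Polynomial.eval 0) hx
  simp at this

lemma aux_sumA (m : ℕ) (k : ℤ) :
    (∑ j ∈ range (m + 1), LaurentPolynomial.C ((-1 : ℂ) ^ j) * T (k - 2 * (j : ℤ)))
      * (T 1 + T (-1))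
    = T (k + 1) + LaurentPolynomial.C ((-1 : ℂ) ^ m) * T (k - 2 * (m : ℤ) - 1) := by
  induction m with
  | zero =>
      have e1 : T (k : ℤ) * T 1 = (T (k + 1) : LaurentPolynomial ℂ) := (T_add k 1).symm
      have e2 : T (k : ℤ) * T (-1) = (T (k - 1) : LaurentPolynomial ℂ) := by
        rw [← T_add]; norm_num [sub_eq_add_neg]
      rw [zero_add, range_one, sum_singleton]
      norm_num [mul_add, e1, e2]
  | succ m ih =>
      rw [sum_range_succ, add_mul, ih]
      have e1 : T (k - 2 * ((m : ℤ) + 1)) * T 1 = (T (k - 2 * m - 1) : LaurentPolynomial ℂ) := by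
        rw [← T_add]; congr 1 <;> omega
      have e2 : T (k - 2 * ((m : ℤ) + 1)) * T (-1)
          = (T (k - 2 * ((m : ℤ) + 1) - 1) : LaurentPolynomial ℂ) := by
        rw [← T_add]; congr 1 <;> omega
      have e3 : LaurentPolynomial.C ((-1 : ℂ) ^ (m + 1))
          = -LaurentPolynomial.C ((-1 : ℂ) ^ m) := by
        rw [pow_succ, map_mul, map_neg, map_one]; ring
      push_cast
      rw [mul_assoc, mul_add, e1, e2, e3]
      push_cast
      ring

lemma aux_sumB (m : ℕ) (k : ℤ) :
    (∑ j ∈ range (m + 1), (T (k - 2 * (j : ℤ)) : LaurentPolynomial ℂ)) * (T 1 - T (-1))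
    = T (k + 1) - T (k - 2 * (m : ℤ) - 1) := by
  induction m with
  | zero =>
      have e1 : T (k : ℤ) * T 1 = (T (k + 1) : LaurentPolynomial ℂ) := (T_add k 1).symm
      have e2 : T (k : ℤ) * T (-1) = (T (k - 1) : LaurentPolynomial ℂ) := by
        rw [← T_add]; norm_num [sub_eq_add_neg]
      rw [zero_add, range_one, sum_singleton]
      norm_num [mul_sub, e1, e2]
  | succ m ih =>
      rw [sum_range_succ, add_mul, ih]
      have e1 : T (k - 2 * ((m : ℤ) + 1)) * T 1 = (T (k - 2 * m - 1) : LaurentPolynomial ℂ) := by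
        rw [← T_add]; congr 1 <;> omega
      have e2 : T (k - 2 * ((m : ℤ) + 1)) * T (-1)
          = (T (k - 2 * ((m : ℤ) + 1) - 1) : LaurentPolynomial ℂ) := by
        rw [← T_add]; congr 1 <;> omega
      push_cast
      rw [mul_sub, e1, e2]
      push_cast
      ring


/-- If `p, q ∈ ℂ[u,u⁻¹]` are symmetric under `u ↦ u⁻¹` and satisfy
`p(u)·(u + u⁻¹) + q(u)·(u − u⁻¹) = u^{-(2n+1)}`, then
`p(u) = ½·∑_{j=0}^{2n} (−1)^j u^{2n−2j}` and `q(u) = −½·∑_{j=0}^{2n} u^{2n−2j}`. -/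
theorem laurent_symmetric_solution (n : ℕ) (p q : LaurentPolynomial ℂ)
    (hp : ∀ j : ℤ, p.coeff j = p.coeff (-j)) (hq : ∀ j : ℤ, q.coeff j = q.coeff (-j))
    (h : p * (T 1 + T (-1)) + q * (T 1 - T (-1)) = T (-(2 * (n : ℤ) + 1))) :
    p = LaurentPolynomial.C (1 / 2 : ℂ) *
        ∑ j ∈ range (2 * n + 1), LaurentPolynomial.C ((-1 : ℂ) ^ j) * T (2 * (n : ℤ) - 2 * j) ∧
    q = -LaurentPolynomial.C (1 / 2 : ℂ) *
        ∑ j ∈ range (2 * n + 1), T (2 * (n : ℤ) - 2 * j) := by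
  have hpI : invert p = p := by
    ext j
    rw [invert_apply, ← hp j]
  have hqI : invert q = q := by
    ext j
    rw [invert_apply, ← hq j]
  have h2 : p * (T (-1) + T 1) + q * (T (-1) - T 1) = T (2 * (n : ℤ) + 1) := by
    have := congrArg invert h
    simpa [map_add, map_mul, map_sub, invert_T, hpI, hqI] using this
  have hP : p * (T 1 + T (-1)) * 2 = T (-(2 * (n : ℤ) + 1)) + T (2 * (n : ℤ) + 1) := by
    linear_combination h + h2
  have hQ : q * (T 1 - T (-1)) * 2 = T (-(2 * (n : ℤ) + 1)) - T (2 * (n : ℤ) + 1) := by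
    linear_combination h - h2
  have key : LaurentPolynomial.C (2 : ℂ) * LaurentPolynomial.C (1 / 2 : ℂ) =
      (1 : LaurentPolynomial ℂ) := by
    rw [← map_mul]; norm_num
  have c2 : (LaurentPolynomial.C (2 : ℂ)) = (2 : LaurentPolynomial ℂ) := by
    simp [map_ofNat]
  -- p part
  have hA := aux_sumA (2 * n) (2 * (n : ℤ))
  have hS : ((2*n : ℕ) : ℤ) = 2 * (n : ℤ) := by push_cast; ring
  rw [hS] at hA
  have hpow : ((-1 : ℂ) ^ (2 * n)) = 1 := by
    rw [pow_mul]; norm_num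
  rw [hpow, map_one, one_mul] at hA
  have hidx : 2 * (n : ℤ) - 2 * (2 * (n : ℤ)) - 1 = -(2 * (n : ℤ) + 1) := by ring
  rw [hidx] at hA
  have hPeq : p * (T 1 + T (-1)) * 2
      = (LaurentPolynomial.C (1 / 2 : ℂ) *
          ∑ j ∈ range (2 * n + 1), LaurentPolynomial.C ((-1 : ℂ) ^ j) * T (2 * (n : ℤ) - 2 * j))
        * (T 1 + T (-1)) * 2 := by
    rw [hP]
    rw [mul_right_comm, mul_comm _ (2 : LaurentPolynomial ℂ), ← mul_assoc, ← c2, key, one_mul,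
      hA]
    ring
  have two_ne : (2 : LaurentPolynomial ℂ) ≠ 0 := by
    rw [show (2 : LaurentPolynomial ℂ) = Polynomial.toLaurent 2 from (map_ofNat _ 2).symm]
    exact Polynomial.toLaurent_ne_zero.mpr two_ne_zero
  have hp' : p = LaurentPolynomial.C (1 / 2 : ℂ) *
      ∑ j ∈ range (2 * n + 1), LaurentPolynomial.C ((-1 : ℂ) ^ j) * T (2 * (n : ℤ) - 2 * j) :=
    mul_right_cancel₀ aux_Tadd_ne (mul_right_cancel₀ two_ne hPeq)
  -- q part
  have hB := aux_sumB (2 * n) (2 * (n : ℤ))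
  rw [hS] at hB
  rw [hidx] at hB
  have hQeq : q * (T 1 - T (-1)) * 2
      = (-LaurentPolynomial.C (1 / 2 : ℂ) *
          ∑ j ∈ range (2 * n + 1), T (2 * (n : ℤ) - 2 * j))
        * (T 1 - T (-1)) * 2 := by
    have rear : (-LaurentPolynomial.C (1 / 2 : ℂ) *
          ∑ j ∈ range (2 * n + 1), T (2 * (n : ℤ) - 2 * j)) * (T 1 - T (-1)) * 2
        = (LaurentPolynomial.C (2 : ℂ) * LaurentPolynomial.C (1 / 2 : ℂ)) *
          -((∑ j ∈ range (2 * n + 1), (T (2 * (n : ℤ) - 2 * j) : LaurentPolynomial ℂ)) *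
            (T 1 - T (-1))) := by
      rw [c2]; ring
    rw [hQ, rear, key, one_mul, hB]
    ring
  have hq' : q = -LaurentPolynomial.C (1 / 2 : ℂ) *
      ∑ j ∈ range (2 * n + 1), T (2 * (n : ℤ) - 2 * j) :=
    mul_right_cancel₀ aux_Tsub_ne (mul_right_cancel₀ two_ne hQeq)
  exact ⟨hp', hq'⟩
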